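/- For every n ≥ 3: every averaging algorithm (u_p)_{p∈{1,…,n}} for n processes that is α-contracting in the nonsplit network model satisfies α ≥ 1/2. That is, if for every nonsplit communication graph G on n nodes and every x ∈ [0,1]^n, the vector x' with x'_p = u_p(In_p(G), x) satisfies δ(x') ≤ α·δ(x), then α ≥ 1/2. -/

import Mathlib

/-- `δ(x) = max_p x_p − min_p x_p`. -/
noncomputable def delta {n : ℕ} (x : Fin n → ℝ) : ℝ :=
  sSup (Set.range x) - sInf (Set.range x)

/-- A communication graph is nonsplit if any two nodes have a common incoming neighbor. -/
def Nonsplit {n : ℕ} (E : Fin n → Fin n → Prop) : Prop :=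
  ∀ p q, ∃ r, E r p ∧ E r q

lemma delta_ge {n : ℕ} (y : Fin n → ℝ) (a b : Fin n) : y a - y b ≤ delta y := by
  unfold delta
  exact sub_le_sub
    (le_csSup ((Set.finite_range y).bddAbove) (Set.mem_range_self a))
    (csInf_le ((Set.finite_range y).bddBelow) (Set.mem_range_self b))

theorem contraction_lower_bound_ge_three
    (n : ℕ) (hn : 3 ≤ n) (α : ℝ)
    (u : Fin n → Set (Fin n) → (Fin n → ℝ) → ℝ)
    -- (i) `u p S x` lies between the min and the max of the values `x q`, `q ∈ S`
    (hrange : ∀ (p : Fin n) (S : Set (Fin n)) (x : Fin n → ℝ), S.Nonempty →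
      sInf (x '' S) ≤ u p S x ∧ u p S x ≤ sSup (x '' S))
    -- (ii) `u p S x` depends only on the values `x q` for `q ∈ S`
    (hdep : ∀ (p : Fin n) (S : Set (Fin n)) (x y : Fin n → ℝ),
      (∀ q ∈ S, x q = y q) → u p S x = u p S y)
    -- the algorithm is α-contracting in the nonsplit network model
    (hcontract : ∀ E : Fin n → Fin n → Prop, (∀ p, E p p) → Nonsplit E →
      ∀ x : Fin n → ℝ, (∀ p, x p ∈ Set.Icc (0 : ℝ) 1) →
        delta (fun p => u p {q | E q p} x) ≤ α * delta x) :
    1 / 2 ≤ α := by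
  set i0 : Fin n := ⟨0, by omega⟩ with hi0
  set i1 : Fin n := ⟨1, by omega⟩ with hi1
  set i2 : Fin n := ⟨2, by omega⟩ with hi2
  have h01 : i0 ≠ i1 := by simp [hi0, hi1, Fin.ext_iff]
  have h02 : i0 ≠ i2 := by simp [hi0, hi2, Fin.ext_iff]
  have h12 : i1 ≠ i2 := by simp [hi1, hi2, Fin.ext_iff]
  haveI : Nonempty (Fin n) := ⟨i0⟩
  set x : Fin n → ℝ := fun p => if p = i1 then 1 else 0 with hx
  have hx1 : x i1 = 1 := by simp [hx]
  have hxIcc : ∀ p, x p ∈ Set.Icc (0 : ℝ) 1 := by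
    intro p; by_cases h : p = i1 <;> simp [hx, h]
  -- delta x = 1
  have hsup : sSup (Set.range x) = 1 := by
    apply le_antisymm
    · apply csSup_le (Set.range_nonempty x)
      rintro _ ⟨p, rfl⟩; exact (hxIcc p).2
    · exact le_csSup ((Set.finite_range x).bddAbove) ⟨i1, hx1⟩
  have hinf : sInf (Set.range x) = 0 := by
    apply le_antisymm
    · exact csInf_le ((Set.finite_range x).bddBelow) ⟨i0, by simp [hx, h01]⟩
    · apply le_csInf (Set.range_nonempty x)
      rintro _ ⟨p, rfl⟩; exact (hxIcc p).1
  have hdx : delta x = 1 := by simp [delta, hsup, hinf]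
  set T : Set (Fin n) := {i0, i1, i2} with hT
  set c : ℝ := u i2 T x with hc
  -- helper: output on a singleton set {a}
  have hsingle : ∀ a : Fin n, u a {a} x = x a := by
    intro a
    have h := hrange a {a} x ⟨a, rfl⟩
    rw [Set.image_singleton, csSup_singleton, csInf_singleton] at h
    linarith [h.1, h.2]
  rcases le_total c (1/2) with hcle | hcge
  · -- case c ≤ 1/2 : node i1 hears only itself, outputs 1; node i2 hears T, outputs c
    set E : Fin n → Fin n → Prop :=
      fun r p => r = i1 ∨ r = p ∨ (p = i2 ∧ (r = i0 ∨ r = i2)) with hE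
    have hself : ∀ p, E p p := fun p => Or.inr (Or.inl rfl)
    have hns : Nonsplit E := fun p q => ⟨i1, Or.inl rfl, Or.inl rfl⟩
    have hmain := hcontract E hself hns x hxIcc
    set y : Fin n → ℝ := fun p => u p {q | E q p} x with hy
    have hyi1 : y i1 = 1 := by
      have hSeq : {q | E q i1} = {i1} := by
        ext q; simp only [hE, Set.mem_setOf_eq, Set.mem_singleton_iff]
        constructor
        · rintro (h | h | ⟨h, _⟩)
          · exact h
          · exact h
          · exact absurd h h12
        · intro h; exact Or.inl h
      rw [hy]; simp only [hSeq]; rw [hsingle i1, hx1]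
    have hyi2 : y i2 = c := by
      have hSeq : {q | E q i2} = T := by
        ext q; simp only [hE, hT, Set.mem_setOf_eq, Set.mem_insert_iff,
          Set.mem_singleton_iff]
        tauto
      rw [hy]; simp only [hSeq]; exact hc.symm
    have hge : (1:ℝ)/2 ≤ delta y := by
      have := delta_ge y i1 i2
      rw [hyi1, hyi2] at this
      linarith
    rw [hdx, mul_one] at hmain
    exact le_trans hge hmain
  · -- case c ≥ 1/2 : node i0 hears only itself, outputs 0; node i2 hears T, outputs c
    set E : Fin n → Fin n → Prop :=
      fun r p => r = i0 ∨ r = p ∨ (p = i2 ∧ (r = i1 ∨ r = i2)) with hE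
    have hself : ∀ p, E p p := fun p => Or.inr (Or.inl rfl)
    have hns : Nonsplit E := fun p q => ⟨i0, Or.inl rfl, Or.inl rfl⟩
    have hmain := hcontract E hself hns x hxIcc
    set y : Fin n → ℝ := fun p => u p {q | E q p} x with hy
    have hyi0 : y i0 = 0 := by
      have hSeq : {q | E q i0} = {i0} := by
        ext q; simp only [hE, Set.mem_setOf_eq, Set.mem_singleton_iff]
        constructor
        · rintro (h | h | ⟨h, _⟩)
          · exact h
          · exact h
          · exact absurd h h02
        · intro h; exact Or.inl h
      rw [hy]; simp only [hSeq]; rw [hsingle i0]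
      simp [hx, h01]
    have hyi2 : y i2 = c := by
      have hSeq : {q | E q i2} = T := by
        ext q; simp only [hE, hT, Set.mem_setOf_eq, Set.mem_insert_iff,
          Set.mem_singleton_iff]
        tauto
      rw [hy]; simp only [hSeq]; exact hc.symm
    have hge : (1:ℝ)/2 ≤ delta y := by
      have := delta_ge y i2 i0
      rw [hyi0, hyi2] at this
      linarith
    rw [hdx, mul_one] at hmain
    exact le_trans hge hmain
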